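/- Let d = (d_1, ..., d_r) be a tuple of positive integers and N = d_1·d_2···d_r. Then the semigroup M_d = {(m_1,...,m_r) ∈ ℤ_{≥0}^r : Σ m_i d_i ≡ 0 mod N} is generated (as an additive semigroup) by the set S_d = {(m_1,...,m_r) ∈ ℤ_{≥0}^r : Σ m_i d_i = N}. -/

import Mathlib

open Multiset

variable {ι : Type*}

private lemma vs_const (val : ι → ℕ) {c : ℕ} {K : Multiset ι}
    (h : ∀ x ∈ K, val x = c) : (K.map val).sum = Multiset.card K * c := by
  have : K.map val = Multiset.replicate (Multiset.card K) c := by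
    apply Multiset.eq_replicate.2
    refine ⟨by simp, fun b hb => ?_⟩
    obtain ⟨x, hx, rfl⟩ := Multiset.mem_map.1 hb
    exact h x hx
  rw [this, Multiset.sum_replicate, smul_eq_mul]

private lemma exists_block (val : ι → ℕ) {c : ℕ} (hc : 0 < c) (l : List ι)
    (hl : l.length = c) :
    ∃ B : Multiset ι, B ≤ (l : Multiset ι) ∧ B ≠ 0 ∧ c ∣ (B.map val).sum := by
  haveI : NeZero c := ⟨hc.ne'⟩
  have hcard : Fintype.card (ZMod c) < Fintype.card (Fin (c + 1)) := by
    simp [ZMod.card]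
  obtain ⟨a, b, hab, hfab⟩ := Fintype.exists_ne_map_eq_of_card_lt
    (fun j : Fin (c + 1) => ((((l.take j.val).map val).sum : ℕ) : ZMod c)) hcard
  have habv : a.val ≠ b.val := fun h => hab (Fin.val_injective h)
  wlog hlt : a.val < b.val generalizing a b
  · exact this b a hab.symm hfab.symm habv.symm (by omega)
  set seg := (l.take b.val).drop a.val with hseg
  have htj : l.take b.val = l.take a.val ++ seg := by
    conv_lhs => rw [← List.take_append_drop a.val (l.take b.val)]
    rw [List.take_take, min_eq_left hlt.le]
  have hsum : ((l.take b.val).map val).sum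
      = ((l.take a.val).map val).sum + ((seg.map val).sum) := by
    rw [htj, List.map_append, List.sum_append]
  have hdvd : c ∣ (seg.map val).sum := by
    have h0 : (((seg.map val).sum : ℕ) : ZMod c) = 0 := by
      have h1 := hfab
      rw [hsum, Nat.cast_add] at h1
      exact (left_eq_add.1 h1)
    exact (ZMod.natCast_eq_zero_iff _ _).1 h0
  refine ⟨(seg : Multiset ι), ?_, ?_, ?_⟩
  · exact Multiset.coe_le.2 (((List.drop_sublist _ _).trans (List.take_sublist _ _)).subperm)
  · have hlen : seg.length = b.val - a.val := by
      simp [hseg, List.length_drop, List.length_take, hl]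
      omega
    have : seg ≠ [] := by
      intro h
      rw [h] at hlen
      simp at hlen
      omega
    simpa [Multiset.coe_eq_zero] using this
  · simpa using hdvd


private lemma exists_partition [DecidableEq ι] (val : ι → ℕ) {c D : ℕ} (hc : 0 < c) :
    ∀ (n : ℕ) (L : Multiset ι), Multiset.card L = n →
    (∀ x ∈ L, val x ≤ D) → (c ∣ (L.map val).sum) →
    ∃ blocks : List (Multiset ι), blocks.sum = L ∧
      ∀ B ∈ blocks, c ∣ (B.map val).sum ∧ (B.map val).sum ≤ c * D := by
  intro n
  induction n using Nat.strong_induction_on with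
  | _ n IH =>
    intro L hn hbound hdvd
    by_cases hcard : Multiset.card L ≤ c
    · refine ⟨[L], by simp, ?_⟩
      intro B hB
      rw [List.mem_singleton] at hB
      rw [hB]
      refine ⟨hdvd, ?_⟩
      calc (L.map val).sum ≤ Multiset.card (L.map val) * D := by
            apply Multiset.sum_le_card_nsmul
            intro x hx
            obtain ⟨y, hy, rfl⟩ := Multiset.mem_map.1 hx
            exact hbound y hy
        _ ≤ c * D := by
            rw [Multiset.card_map]
            exact Nat.mul_le_mul_right D hcard
    · push_neg at hcard
      set l := L.toList.take c with hl
      have hlen : l.length = c := by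
        simp [hl, List.length_take, Multiset.length_toList]
        omega
      obtain ⟨B, hBle, hBne, hBdvd⟩ := exists_block val hc l hlen
      have hBleL : B ≤ L := by
        refine hBle.trans ?_
        have h1 : (l : Multiset ι) ≤ (L.toList : Multiset ι) :=
          Multiset.coe_le.2 ((List.take_sublist _ _).subperm)
        simpa [Multiset.coe_toList] using h1
      have hLsplit : L = (L - B) + B := (tsub_add_cancel_of_le hBleL).symm
      have hcardsub : Multiset.card (L - B) < n := by
        rw [Multiset.card_sub hBleL] at *
        have hBpos : 0 < Multiset.card B := Multiset.card_pos.2 hBne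
        have hBcard : Multiset.card B ≤ Multiset.card L :=
          Multiset.card_le_card hBleL
        omega
      have hsubdvd : c ∣ ((L - B).map val).sum := by
        have hsum : (L.map val).sum = ((L - B).map val).sum + (B.map val).sum := by
          conv_lhs => rw [hLsplit]
          rw [Multiset.map_add, Multiset.sum_add]
        rw [hsum] at hdvd
        exact (Nat.dvd_add_iff_left hBdvd).2 hdvd
      obtain ⟨blocks, hbsum, hbprop⟩ := IH _ hcardsub (L - B) rfl
        (fun x hx => hbound x (Multiset.mem_of_le (Multiset.sub_le_self _ _) hx)) hsubdvd
      refine ⟨B :: blocks, ?_, ?_⟩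
      · rw [List.sum_cons, hbsum]
        rw [add_comm]
        exact (tsub_add_cancel_of_le hBleL)
      · intro B' hB'
        rcases List.mem_cons.1 hB' with h | h
        · subst h
          refine ⟨hBdvd, ?_⟩
          calc (B'.map val).sum ≤ Multiset.card (B'.map val) * D := by
                apply Multiset.sum_le_card_nsmul
                intro x hx
                obtain ⟨y, hy, rfl⟩ := Multiset.mem_map.1 hx
                exact hbound y (Multiset.mem_of_le hBleL hy)
            _ ≤ c * D := by
                rw [Multiset.card_map]
                apply Nat.mul_le_mul_right
                calc Multiset.card B' ≤ Multiset.card (l : Multiset ι) :=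
                      Multiset.card_le_card hBle
                  _ = c := by simpa using hlen
        · exact hbprop B' h

private lemma exists_greedy (val : ι → ℕ) {c Dc : ℕ} :
    ∀ (bs : List (Multiset ι)) (P : ℕ),
      (∀ B ∈ bs, c ∣ (B.map val).sum ∧ (B.map val).sum ≤ Dc) →
      ∃ U : Multiset ι, U ≤ bs.sum ∧ c ∣ (U.map val).sum ∧ (U.map val).sum ≤ P ∧
        (P < (U.map val).sum + Dc ∨ (U.map val).sum = ((bs.sum : Multiset ι).map val).sum) := by
  intro bs
  induction bs with
  | nil =>
      intro P _
      exact ⟨0, le_rfl, by simp, by simp, Or.inr (by simp)⟩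
  | cons B tl IH =>
      intro P hprop
      have hB := hprop B List.mem_cons_self
      by_cases hBP : (B.map val).sum ≤ P
      · obtain ⟨U', hU'le, hU'dvd, hU'P, hU'alt⟩ := IH (P - (B.map val).sum)
          (fun B' hB' => hprop B' (List.mem_cons_of_mem _ hB'))
        refine ⟨B + U', ?_, ?_, ?_, ?_⟩
        · rw [List.sum_cons]
          exact add_le_add_right hU'le B
        · rw [Multiset.map_add, Multiset.sum_add]
          exact dvd_add hB.1 hU'dvd
        · rw [Multiset.map_add, Multiset.sum_add]
          omega
        · rw [Multiset.map_add, Multiset.sum_add]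
          rcases hU'alt with h | h
          · left; omega
          · right
            rw [List.sum_cons, Multiset.map_add, Multiset.sum_add, h]
      · obtain ⟨U', hU'le, hU'dvd, hU'P, hU'alt⟩ := IH P
          (fun B' hB' => hprop B' (List.mem_cons_of_mem _ hB'))
        refine ⟨U', ?_, hU'dvd, hU'P, ?_⟩
        · rw [List.sum_cons]
          exact hU'le.trans (le_add_left _ _)
        · left
          have : P < (B.map val).sum := by omega
          omega


private lemma sum_le_prod_add_one :
    ∀ (G : Finset ℕ), (∀ v ∈ G, 0 < v) → ∑ v ∈ G, v ≤ (∏ v ∈ G, v) + 1 := by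
  intro G
  induction G using Finset.induction_on_max with
  | empty => simp
  | insert a s ha IH =>
      intro hpos
      have has : a ∉ s := fun h => lt_irrefl a (ha a h)
      rw [Finset.sum_insert has, Finset.prod_insert has]
      have hIH := IH (fun v hv => hpos v (Finset.mem_insert_of_mem hv))
      have hP1 : 1 ≤ ∏ v ∈ s, v :=
        Finset.one_le_prod' (fun v hv => hpos v (Finset.mem_insert_of_mem hv))
      have ha1 : 1 ≤ a := hpos a (Finset.mem_insert_self _ _)
      rcases Finset.eq_empty_or_nonempty s with rfl | hs
      · simp
      · obtain ⟨x, hx⟩ := hs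
        have hx1 : 1 ≤ x := hpos x (Finset.mem_insert_of_mem hx)
        have ha2 : 2 ≤ a := by have := ha x hx; omega
        by_cases hPone : (∏ v ∈ s, v) = 1
        · have hall : ∀ v ∈ s, v = 1 :=
            (Finset.prod_eq_one_iff_of_one_le'
              (fun v hv => hpos v (Finset.mem_insert_of_mem hv))).1 hPone
          have hsub : s ⊆ {1} := fun v hv => by
            simp [hall v hv]
          have hsum1 : ∑ v ∈ s, v ≤ 1 := by
            calc ∑ v ∈ s, v ≤ ∑ v ∈ ({1} : Finset ℕ), v :=
                  Finset.sum_le_sum_of_subset hsub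
              _ = 1 := by simp
          rw [hPone]
          omega
        · have hP2 : 2 ≤ ∏ v ∈ s, v := by omega
          have key : a + (∏ v ∈ s, v) ≤ a * (∏ v ∈ s, v) := by
            nlinarith
          omega

private lemma prod_image_dvd (f : ι → ℕ) (s : Finset ι) [DecidableEq ι] :
    (∏ v ∈ s.image f, v) ∣ ∏ i ∈ s, f i := by
  classical
  induction s using Finset.induction_on with
  | empty => simp
  | @insert a s ha IH =>
      rw [Finset.image_insert, Finset.prod_insert ha]
      by_cases hfa : f a ∈ s.image f
      · rw [Finset.insert_eq_self.2 hfa]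
        exact IH.trans (dvd_mul_left _ _)
      · rw [Finset.prod_insert hfa]
        exact mul_dvd_mul_left (f a) IH

private lemma multiset_sum_eq_sum_count (A : Multiset ℕ) :
    A.sum = ∑ v ∈ A.toFinset, A.count v * v := by
  induction A using Multiset.induction_on with
  | empty => simp
  | cons a A IH =>
      rw [Multiset.sum_cons, IH]
      by_cases haA : a ∈ A.toFinset
      · have hins : (a ::ₘ A).toFinset = A.toFinset := by
          rw [Multiset.toFinset_cons, Finset.insert_eq_self.2 haA]
        rw [hins]
        rw [← Finset.add_sum_erase _ _ haA, ← Finset.add_sum_erase _ _ haA]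
        have hco : ∀ v ∈ A.toFinset.erase a, (a ::ₘ A).count v * v = A.count v * v := by
          intro v hv
          rw [Multiset.count_cons_of_ne (Finset.ne_of_mem_erase hv) A]
        rw [Finset.sum_congr rfl hco, Multiset.count_cons_self]
        ring
      · have haA' : a ∉ A := fun h => haA (Multiset.mem_toFinset.2 h)
        have hins : (a ::ₘ A).toFinset = insert a A.toFinset := Multiset.toFinset_cons _ _
        rw [hins, Finset.sum_insert haA]
        have hca : (a ::ₘ A).count a = 1 := by
          rw [Multiset.count_cons_self, Multiset.count_eq_zero_of_notMem haA']
        rw [hca]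
        have hco : ∀ v ∈ A.toFinset, (a ::ₘ A).count v * v = A.count v * v := by
          intro v hv
          have : v ≠ a := by
            rintro rfl; exact haA hv
          rw [Multiset.count_cons_of_ne this A]
        rw [Finset.sum_congr rfl hco]
        ring


private lemma key [DecidableEq ι] (val : ι → ℕ) (N : ℕ) (hN : 0 < N)
    (L : Multiset ι) (hpos : ∀ x ∈ L, 0 < val x)
    (hprod : (∏ v ∈ (L.map val).toFinset, v) ∣ N)
    (hdvd : N ∣ (L.map val).sum) (hge : N ≤ (L.map val).sum) :
    ∃ L', L' ≤ L ∧ (L'.map val).sum = N := by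
  by_cases hSN : (L.map val).sum = N
  · exact ⟨L, le_rfl, hSN⟩
  have hS2 : 2 * N ≤ (L.map val).sum := by
    obtain ⟨k, hk⟩ := hdvd
    rcases k with _ | _ | k
    · simp at hk; omega
    · simp at hk; omega
    · rw [hk]
      calc 2 * N = N * 2 := by ring
        _ ≤ N * (k + 1 + 1) := Nat.mul_le_mul_left N (by omega)
  set F := (L.map val).toFinset with hF
  have hmemF : ∀ v ∈ F, ∃ x ∈ L, val x = v := by
    intro v hv
    rw [hF, Multiset.mem_toFinset] at hv
    exact Multiset.mem_map.1 hv
  have hFpos : ∀ v ∈ F, 0 < v := by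
    intro v hv
    obtain ⟨x, hx, rfl⟩ := hmemF v hv
    exact hpos x hx
  have hFdvd : ∀ v ∈ F, v ∣ N := fun v hv =>
    (Finset.dvd_prod_of_mem (fun v => v) hv).trans hprod
  have hcount1 : ∀ v ∈ F, 1 ≤ (L.map val).count v := by
    intro v hv
    rw [hF, Multiset.mem_toFinset] at hv
    exact Multiset.count_pos.2 hv
  by_cases hgood : ∃ c ∈ F, ∀ v ∈ F.erase c, v ≤ (L.map val).count c + 1
  · -- block/greedy construction
    obtain ⟨c, hcF, hDbound⟩ := hgood
    set Mc := (L.map val).count c with hMc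
    have hc0 : 0 < c := hFpos c hcF
    have hcN : c ∣ N := hFdvd c hcF
    set Lc := L.filter (fun x => c = val x) with hLc
    set Lr := L.filter (fun x => ¬ (c = val x)) with hLr
    have hsplit : Lc + Lr = L := Multiset.filter_add_not _ L
    have hcardLc : Multiset.card Lc = Mc := by
      rw [hMc, Multiset.count_map]
    have hLcval : ∀ x ∈ Lc, val x = c := by
      intro x hx
      exact ((Multiset.mem_filter.1 hx).2).symm
    have hvLc : (Lc.map val).sum = Mc * c := by
      rw [vs_const val hLcval, hcardLc]
    have hSsplit : (L.map val).sum = Mc * c + (Lr.map val).sum := by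
      conv_lhs => rw [← hsplit]
      rw [Multiset.map_add, Multiset.sum_add, hvLc]
    have hcS : c ∣ (L.map val).sum := hcN.trans hdvd
    have hcLr : c ∣ (Lr.map val).sum := by
      rw [hSsplit] at hcS
      exact (Nat.dvd_add_right (Dvd.intro_left Mc rfl)).1 hcS
    have hboundLr : ∀ x ∈ Lr, val x ≤ Mc + 1 := by
      intro x hx
      have hxL : x ∈ L := Multiset.mem_of_le (Multiset.filter_le _ L) hx
      have hvF : val x ∈ F := by
        rw [hF, Multiset.mem_toFinset]
        exact Multiset.mem_map_of_mem val hxL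
      have hvne : val x ≠ c := fun h => ((Multiset.mem_filter.1 hx).2) h.symm
      exact hDbound (val x) (Finset.mem_erase.2 ⟨hvne, hvF⟩)
    obtain ⟨blocks, hbsum, hbprop⟩ :=
      exists_partition val (D := Mc + 1) hc0 (Multiset.card Lr) Lr rfl hboundLr hcLr
    obtain ⟨U, hUle, hUdvd, hUP, hUalt⟩ :=
      exists_greedy val (c := c) (Dc := c * (Mc + 1)) blocks N hbprop
    rw [hbsum] at hUle hUalt
    set V := (U.map val).sum with hV
    have hVN : V ≤ N := hUP
    have hNV : N - V ≤ c * Mc := by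
      rcases hUalt with h | h
      · have hdNV : c ∣ N - V := Nat.dvd_sub hcN hUdvd
        obtain ⟨q, hq⟩ := hdNV
        have h2 : c * q < c * (Mc + 1) := by omega
        have h3 : q < Mc + 1 := Nat.lt_of_mul_lt_mul_left h2
        calc N - V = c * q := hq
          _ ≤ c * Mc := Nat.mul_le_mul_left c (by omega)
      · have : V + Mc * c = (L.map val).sum := by omega
        have hcm : c * Mc = Mc * c := Nat.mul_comm _ _
        omega
    have hdNV : c ∣ N - V := Nat.dvd_sub hcN hUdvd
    obtain ⟨q, hq⟩ := hdNV
    have hqMc : q ≤ Mc := by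
      have h1 : c * q ≤ c * Mc := by omega
      exact Nat.le_of_mul_le_mul_left h1 hc0
    set W : Multiset ι := ((Lc.toList.take q : List ι) : Multiset ι) with hW
    have hWle : W ≤ Lc := by
      have h1 : ((Lc.toList.take q : List ι) : Multiset ι) ≤ (Lc.toList : Multiset ι) :=
        Multiset.coe_le.2 ((List.take_sublist _ _).subperm)
      rw [hW]
      simpa [Multiset.coe_toList] using h1
    have hcardW : Multiset.card W = q := by
      rw [hW, Multiset.coe_card, List.length_take, Multiset.length_toList, hcardLc]
      omega
    have hWval : ∀ x ∈ W, val x = c := fun x hx => hLcval x (Multiset.mem_of_le hWle hx)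
    have hvW : (W.map val).sum = q * c := by rw [vs_const val hWval, hcardW]
    refine ⟨U + W, ?_, ?_⟩
    · calc U + W ≤ Lr + Lc := add_le_add hUle hWle
        _ = L := by rw [add_comm]; exact hsplit
    · rw [Multiset.map_add, Multiset.sum_add, hvW]
      have hcm : c * q = q * c := Nat.mul_comm _ _
      omega
  · -- residual case: contradiction
    exfalso
    push_neg at hgood
    have hLne : (L.map val) ≠ 0 := by
      intro h
      rw [h] at hge
      simp at hge
      omega
    have hFne : F.Nonempty := by
      rw [hF]
      exact Multiset.toFinset_nonempty.2 hLne
    set a := F.max' hFne with ha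
    have haF : a ∈ F := F.max'_mem hFne
    obtain ⟨b, hbG, hba⟩ := hgood a haF
    have hbF : b ∈ F := Finset.mem_of_mem_erase hbG
    have hcnta : 1 ≤ (L.map val).count a := hcount1 a haF
    have hb3 : (L.map val).count a + 2 ≤ b := by omega
    have hGbound : ∀ v ∈ F.erase a, (L.map val).count v + 2 ≤ a := by
      intro v hv
      obtain ⟨w, hwF, hw⟩ := hgood v (Finset.mem_of_mem_erase hv)
      have : w ≤ a := Finset.le_max' F w (Finset.mem_of_mem_erase hwF)
      omega
    have ha2 : 2 ≤ a := by
      have := hGbound b hbG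
      have := hcount1 b hbF
      omega
    -- pooled sum
    have hsumF : (L.map val).sum = ∑ v ∈ F, (L.map val).count v * v :=
      multiset_sum_eq_sum_count _
    have hsplitF : ∑ v ∈ F, (L.map val).count v * v
        = (L.map val).count a * a + ∑ v ∈ F.erase a, (L.map val).count v * v :=
      (Finset.add_sum_erase F _ haF).symm
    have hsumG : ∑ v ∈ F.erase a, (L.map val).count v * v
        ≤ ∑ v ∈ F.erase a, (a - 2) * v := by
      apply Finset.sum_le_sum
      intro v hv
      exact Nat.mul_le_mul_right v (by have := hGbound v hv; omega)
    have hSGle : ∑ v ∈ F.erase a, v ≤ (∏ v ∈ F.erase a, v) + 1 :=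
      sum_le_prod_add_one _ (fun v hv => hFpos v (Finset.mem_of_mem_erase hv))
    have hbP : b ≤ ∏ v ∈ F.erase a, v :=
      Finset.single_le_prod' (f := fun v => v) (fun v hv => hFpos v (Finset.mem_of_mem_erase hv)) hbG
    have hprodFsplit : a * (∏ v ∈ F.erase a, v) = ∏ v ∈ F, v :=
      Finset.mul_prod_erase F (fun v => v) haF
    have hprodN : (∏ v ∈ F, v) ≤ N := Nat.le_of_dvd hN hprod
    -- substitution variables
    set P := ∏ v ∈ F.erase a, v with hP
    set SG := ∑ v ∈ F.erase a, v with hSG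
    set ca := (L.map val).count a with hca
    -- inequalities collected:
    -- hsumF/hsplitF/hsumG: Σ ≤ ca * a + (a-2) * SG  (after mul_sum)
    have hmulsum : ∑ v ∈ F.erase a, (a - 2) * v = (a - 2) * SG := by
      rw [hSG, Finset.mul_sum]
    have hS_le : (L.map val).sum ≤ ca * a + (a - 2) * SG := by
      rw [hsumF, hsplitF, ← hmulsum]
      omega
    -- b ≥ ca + 2,  b ≤ P, SG ≤ P + 1, 2*N ≤ Σ, a*P ≤ N, 2 ≤ a, 1 ≤ ca.
    -- derive contradiction
    obtain ⟨A, hA⟩ : ∃ A, a = A + 2 := ⟨a - 2, by omega⟩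
    obtain ⟨t, ht⟩ : ∃ t, P = b + t := ⟨P - b, by omega⟩
    have hfinal : ca * a + (a - 2) * SG < 2 * (a * P) := by
      have hSGP : SG ≤ P + 1 := by omega
      have h1 : ca * a ≤ (b - 2) * a := Nat.mul_le_mul_right a (by omega)
      have h2 : (a - 2) * SG ≤ (a - 2) * (P + 1) := Nat.mul_le_mul_left _ hSGP
      have hA2 : a - 2 = A := by omega
      rw [hA2] at h2
      have hb2 : b - 2 + 2 = b := by omega
      nlinarith [h1, h2, hA, ht, hb3, hcnta]
    have h2NS : 2 * (a * P) ≤ (L.map val).sum := by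
      calc 2 * (a * P) = 2 * (∏ v ∈ F, v) := by rw [hP, hprodFsplit]
        _ ≤ 2 * N := by omega
        _ ≤ (L.map val).sum := hS2
    omega


private lemma map_sum_eq_sum_count {r : ℕ} (d : Fin r → ℕ) (K : Multiset (Fin r)) :
    (K.map d).sum = ∑ i, K.count i * d i := by
  induction K using Multiset.induction_on with
  | empty => simp
  | cons a K IH =>
      rw [Multiset.map_cons, Multiset.sum_cons, IH]
      have expand : ∀ i ∈ Finset.univ, (a ::ₘ K).count i * d i
          = K.count i * d i + (if i = a then d i else 0) := by
        intro i _
        by_cases h : i = a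
        · subst h
          rw [Multiset.count_cons_self]
          simp
          ring
        · rw [Multiset.count_cons_of_ne h]
          simp [h]
      rw [Finset.sum_congr rfl expand, Finset.sum_add_distrib,
        Finset.sum_ite_eq' Finset.univ a d]
      simp [add_comm]

private lemma count_L0 {r : ℕ} (m : Fin r → ℕ) (j : Fin r) :
    (∑ i, (m i) • ({i} : Multiset (Fin r))).count j = m j := by
  rw [Multiset.count_sum']
  simp [Multiset.count_nsmul, Multiset.count_singleton]

/-- The semigroup `M_d = {m ∈ ℤ_{≥0}^r : Σ mᵢdᵢ ≡ 0 mod N}` (N = ∏ dᵢ) is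
generated by `S_d = {m : Σ mᵢdᵢ = N}`. -/
theorem Md_generated_by_Sd (r : ℕ) (d : Fin r → ℕ) (hd : ∀ i, 0 < d i) :
    {m : Fin r → ℕ | (∏ i, d i) ∣ ∑ i, m i * d i} ⊆
      (AddSubmonoid.closure {m : Fin r → ℕ | ∑ i, m i * d i = ∏ i, d i} : Set (Fin r → ℕ)) := by
  classical
  intro m hm
  simp only [Set.mem_setOf_eq] at hm
  have H : ∀ (n : ℕ) (m : Fin r → ℕ), (∑ i, m i * d i) = n →
      (∏ i, d i) ∣ ∑ i, m i * d i →
      m ∈ (AddSubmonoid.closure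
        {m : Fin r → ℕ | ∑ i, m i * d i = ∏ i, d i} : AddSubmonoid (Fin r → ℕ)) := by
    intro n
    induction n using Nat.strong_induction_on with
    | _ n IH =>
      intro m hmn hmdvd
      by_cases h0 : ∑ i, m i * d i = 0
      · have hm0 : m = 0 := by
          funext i
          have h1 : m i * d i = 0 :=
            (Finset.sum_eq_zero_iff.1 h0) i (Finset.mem_univ i)
          have h2 := hd i
          simp only [Pi.zero_apply]
          rcases Nat.mul_eq_zero.1 h1 with h | h
          · exact h
          · omega
        rw [hm0]
        exact AddSubmonoid.zero_mem _
      · set N := ∏ i, d i with hNd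
        have hN : 0 < N := Finset.prod_pos (fun i _ => hd i)
        set L : Multiset (Fin r) := ∑ i, (m i) • ({i} : Multiset (Fin r)) with hL
        have hcountL : ∀ j, L.count j = m j := fun j => count_L0 m j
        have hmapL : (L.map d).sum = ∑ i, m i * d i := by
          rw [map_sum_eq_sum_count]
          exact Finset.sum_congr rfl (fun i _ => by rw [hcountL i])
        have hposL : ∀ x ∈ L, 0 < d x := fun x _ => hd x
        have hprodL : (∏ v ∈ (L.map d).toFinset, v) ∣ N := by
          have hsub : (L.map d).toFinset ⊆ Finset.univ.image d := by
            intro v hv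
            rw [Multiset.mem_toFinset] at hv
            obtain ⟨x, _, rfl⟩ := Multiset.mem_map.1 hv
            exact Finset.mem_image_of_mem d (Finset.mem_univ x)
          calc (∏ v ∈ (L.map d).toFinset, v)
              ∣ ∏ v ∈ Finset.univ.image d, v :=
                Finset.prod_dvd_prod_of_subset _ _ _ hsub
            _ ∣ ∏ i, d i := prod_image_dvd d Finset.univ
        have hdvdL : N ∣ (L.map d).sum := by rw [hmapL]; exact hmdvd
        have hgeL : N ≤ (L.map d).sum := by
          rw [hmapL]
          exact Nat.le_of_dvd (by omega) hmdvd
        obtain ⟨L', hL'le, hL'sum⟩ := key d N hN L hposL hprodL hdvdL hgeL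
        set s : Fin r → ℕ := fun i => L'.count i with hs
        have hsle : ∀ i, s i ≤ m i := by
          intro i
          rw [hs, ← hcountL i]
          exact Multiset.count_le_of_le i hL'le
        have hssum : ∑ i, s i * d i = N := by
          rw [hs, ← map_sum_eq_sum_count d L']
          exact hL'sum
        set t : Fin r → ℕ := fun i => m i - s i with ht
        have hmst : m = s + t := by
          funext i
          have := hsle i
          simp only [Pi.add_apply, ht]
          omega
        have hsum_split : ∑ i, m i * d i = ∑ i, s i * d i + ∑ i, t i * d i := by
          rw [← Finset.sum_add_distrib]
          apply Finset.sum_congr rfl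
          intro i _
          have := hsle i
          have hexp : s i * d i + t i * d i = (s i + t i) * d i := by ring
          rw [hexp]
          congr 1
          simp only [ht]
          omega
        have htdvd : N ∣ ∑ i, t i * d i := by
          have h1 : N ∣ ∑ i, s i * d i := by rw [hssum]
          rw [hsum_split] at hmdvd
          exact (Nat.dvd_add_right h1).1 hmdvd
        have htlt : ∑ i, t i * d i < n := by
          have h2 : ∑ i, s i * d i = N := hssum
          omega
        have hsmem : s ∈ (AddSubmonoid.closure
            {m : Fin r → ℕ | ∑ i, m i * d i = ∏ i, d i} : AddSubmonoid (Fin r → ℕ)) :=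
          AddSubmonoid.subset_closure (by
            simp only [Set.mem_setOf_eq]
            rw [hssum])
        have htmem := IH _ htlt t rfl htdvd
        rw [hmst]
        exact AddSubmonoid.add_mem _ hsmem htmem
  exact H _ m rfl hm
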